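/- arXiv:2103.02165 — 4 statements merged into one kernel-verified Lean document; each statement's English description precedes it below -/
import Mathlib

section
/- Let Y, Θ, Ψ be finite types. Let ŷ ∈ Y be the observed label; let PY : Θ → Y → ℝ with each PY θ a strictly positive probability mass function on Y (the likelihood); let p : Ψ → Θ → ℝ with each p ψ a strictly positive probability mass function on Θ (the prior in class ψ); let L : Ψ → ℝ be such that h ψ := 2^(−L ψ) is a probability mass function on Ψ (the parsimonious hyperprior); and fix a baseline θ0 ∈ Θ. For any probability mass functions Qθ ψ on Θ (one for each ψ ∈ Ψ) and Qψ on Ψ, the total information gained, KL(δ_ŷ ⊗ Qθ ⊗ Qψ ‖ PY · p · h) := ∑_{ψ, θ} Qψ ψ * Qθ ψ θ * Real.logb 2 ((Qθ ψ θ * Qψ ψ) / (PY θ ŷ * p ψ θ * h ψ)) (terms with Qψ ψ * Qθ ψ θ = 0 contributing 0), satisfies the identity KL(δ_ŷ ⊗ Qθ ⊗ Qψ ‖ PY · p · h) = Real.logb 2 (1 / PY θ0 ŷ) − ω[Qθ, Qψ], where the parsimony objective is ω[Qθ, Qψ] = ∑_{ψ, θ} Qψ ψ * Qθ ψ θ *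 Real.logb 2 (PY θ ŷ / PY θ0 ŷ) − ∑_ψ Qψ ψ * KL(Qθ ψ ‖ p ψ) − ∑_ψ Qψ ψ * L ψ + H(Qψ). Consequently, minimizing the total information over (Qθ, Qψ) is equivalent to maximizing ω. -/
/-- **Parsimonious Inference Optimization.** The total information gained by
changing belief from the joint prior `PY · p · h` (with parsimonious
hyperprior `h ψ = 2^(-L ψ)`) to `δ_yObs ⊗ Qθ ⊗ Qψ` equals
`logb 2 (1 / PY θ0 yObs) − ω[Qθ, Qψ]`, where `ω` is the parsimony objective
(prediction information minus inference information minus description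
information). Hence minimizing the total information is equivalent to
maximizing `ω`. -/
theorem parsimonious_inference_optimization
    {Y Θ Ψ : Type*} [Fintype Y] [Fintype Θ] [Fintype Ψ]
    (yObs : Y) (PY : Θ → Y → ℝ)
    (hPYpos : ∀ θ y, 0 < PY θ y) (hPY1 : ∀ θ, ∑ y, PY θ y = 1)
    (p : Ψ → Θ → ℝ)
    (hppos : ∀ ψ θ, 0 < p ψ θ) (hp1 : ∀ ψ, ∑ θ, p ψ θ = 1)
    (L : Ψ → ℝ) (hL1 : ∑ ψ, (2 : ℝ) ^ (-(L ψ)) = 1)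
    (θ0 : Θ)
    (Qθ : Ψ → Θ → ℝ)
    (hQθ0 : ∀ ψ θ, 0 ≤ Qθ ψ θ) (hQθ1 : ∀ ψ, ∑ θ, Qθ ψ θ = 1)
    (Qψ : Ψ → ℝ)
    (hQψ0 : ∀ ψ, 0 ≤ Qψ ψ) (hQψ1 : ∑ ψ, Qψ ψ = 1) :
    ∑ ψ, ∑ θ, Qψ ψ * Qθ ψ θ *
        Real.logb 2 ((Qθ ψ θ * Qψ ψ) / (PY θ yObs * p ψ θ * (2 : ℝ) ^ (-(L ψ))))
      = Real.logb 2 (1 / PY θ0 yObs) -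
        ((∑ ψ, ∑ θ, Qψ ψ * Qθ ψ θ * Real.logb 2 (PY θ yObs / PY θ0 yObs))
          - (∑ ψ, Qψ ψ * ∑ θ, Qθ ψ θ * Real.logb 2 (Qθ ψ θ / p ψ θ))
          - (∑ ψ, Qψ ψ * L ψ)
          + (∑ ψ, Qψ ψ * Real.logb 2 (1 / Qψ ψ))) := by
  have hsum : ∀ g : Ψ → ℝ, (∑ ψ, ∑ θ, Qψ ψ * Qθ ψ θ * g ψ) = ∑ ψ, Qψ ψ * g ψ := by
    intro g
    refine Finset.sum_congr rfl fun ψ _ => ?_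
    calc ∑ θ, Qψ ψ * Qθ ψ θ * g ψ = Qψ ψ * g ψ * ∑ θ, Qθ ψ θ := by
          rw [Finset.mul_sum]; exact Finset.sum_congr rfl fun θ _ => by ring
      _ = Qψ ψ * g ψ := by rw [hQθ1 ψ, mul_one]
  have e1 : Real.logb 2 (1 / PY θ0 yObs)
      = ∑ ψ, ∑ θ, Qψ ψ * Qθ ψ θ * Real.logb 2 (1 / PY θ0 yObs) := by
    rw [hsum, ← Finset.sum_mul, hQψ1, one_mul]
  have e2 : (∑ ψ, Qψ ψ * ∑ θ, Qθ ψ θ * Real.logb 2 (Qθ ψ θ / p ψ θ))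
      = ∑ ψ, ∑ θ, Qψ ψ * Qθ ψ θ * Real.logb 2 (Qθ ψ θ / p ψ θ) := by
    refine Finset.sum_congr rfl fun ψ _ => ?_
    rw [Finset.mul_sum]
    exact Finset.sum_congr rfl fun θ _ => by ring
  have e3 : (∑ ψ, Qψ ψ * L ψ) = ∑ ψ, ∑ θ, Qψ ψ * Qθ ψ θ * L ψ := (hsum L).symm
  have e4 : (∑ ψ, Qψ ψ * Real.logb 2 (1 / Qψ ψ))
      = ∑ ψ, ∑ θ, Qψ ψ * Qθ ψ θ * Real.logb 2 (1 / Qψ ψ) :=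
    (hsum fun ψ => Real.logb 2 (1 / Qψ ψ)).symm
  rw [e1, e2, e3, e4]
  simp only [← Finset.sum_sub_distrib, ← Finset.sum_add_distrib]
  refine Finset.sum_congr rfl fun ψ _ => Finset.sum_congr rfl fun θ _ => ?_
  rcases (hQψ0 ψ).eq_or_lt with hψ | hψ
  · simp [← hψ]
  rcases (hQθ0 ψ θ).eq_or_lt with hθ | hθ
  · simp [← hθ]
  have hPY := hPYpos θ yObs
  have hPY0 := hPYpos θ0 yObs
  have hp := hppos ψ θ
  have hpow : (0:ℝ) < (2:ℝ) ^ (-(L ψ)) := Real.rpow_pos_of_pos two_pos _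
  have hlogpow : Real.logb 2 ((2:ℝ) ^ (-(L ψ))) = -(L ψ) :=
    Real.logb_rpow two_pos (by norm_num)
  rw [Real.logb_div (by positivity) (by positivity),
      Real.logb_mul (ne_of_gt hθ) (ne_of_gt hψ),
      Real.logb_mul (by positivity) (ne_of_gt hpow),
      Real.logb_mul (ne_of_gt hPY) (ne_of_gt hp),
      Real.logb_div (ne_of_gt hPY) (ne_of_gt hPY0),
      Real.logb_div (ne_of_gt hθ) (ne_of_gt hp),
      one_div, Real.logb_inv, one_div, Real.logb_inv, hlogpow]
  ring
end

section
/- Let Y, Θ, Ψ be finite types, ŷ ∈ Y the observed label, PY : Θ → Y → ℝ strictly positive likelihoods with each PY θ a probability mass function on Y, p : Ψ → Θ → ℝ strictly positive priors with each p ψ a probability mass function on Θ, h a strictly positive probability mass function on Ψ (the hyperprior), θ0 ∈ Θ a baseline, and ℓ0 := PY θ0 ŷ. For each ψ define the model-class evidence Z ψ := ∑_θ p ψ θ * PY θ ŷ and the posterior π* ψ θ := p ψ θ * PY θ ŷ / Z ψ. Then: (i) substituting Qθ ψ = π* ψ into the parsimony objective ω[Qθ, Qψ] = ∑_{ψ,θ}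 Qψ ψ Qθ ψ θ Real.logb 2 (PY θ ŷ / ℓ0) − ∑_ψ Qψ ψ KL(Qθ ψ ‖ p ψ) − KL(Qψ‖h) yields ω[π*, Qψ] = ∑_ψ Qψ ψ * Real.logb 2 (Z ψ / ℓ0) − KL(Qψ‖h) for every probability mass function Qψ on Ψ; and (ii) this equals Real.logb 2 ((∑_ψ h ψ * Z ψ) / ℓ0) − KL(Qψ ‖ h*) where h* ψ := h ψ * Z ψ / ∑_{ψ'} h ψ' * Z ψ' is the hyperposterior, so the unique maximizer over Qψ is the hyperposterior Qψ = h*. -/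
open Finset Real

lemma gibbs_aux {Ψ : Type*} [Fintype Ψ] (q r : Ψ → ℝ)
    (hq0 : ∀ ψ, 0 ≤ q ψ) (hq1 : ∑ ψ, q ψ = 1)
    (hr : ∀ ψ, 0 < r ψ) (hr1 : ∑ ψ, r ψ = 1) :
    0 ≤ ∑ ψ, q ψ * Real.log (q ψ / r ψ) ∧
      ((∑ ψ, q ψ * Real.log (q ψ / r ψ)) = 0 ↔ q = r) := by
  have key : ∀ ψ ∈ Finset.univ (α := Ψ), q ψ * Real.log (r ψ / q ψ) ≤ r ψ - q ψ := by
    intro ψ _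
    rcases eq_or_lt_of_le (hq0 ψ) with h0 | h0
    · simp [← h0]; exact (hr ψ).le
    · have hx : 0 < r ψ / q ψ := div_pos (hr ψ) h0
      have h1 := Real.log_le_sub_one_of_pos hx
      have h2 : q ψ * Real.log (r ψ / q ψ) ≤ q ψ * (r ψ / q ψ - 1) :=
        mul_le_mul_of_nonneg_left h1 h0.le
      have h3 : q ψ * (r ψ / q ψ - 1) = r ψ - q ψ := by field_simp
      linarith
  have hneg : ∀ ψ, q ψ * Real.log (r ψ / q ψ) = -(q ψ * Real.log (q ψ / r ψ)) := by
    intro ψ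
    rcases eq_or_lt_of_le (hq0 ψ) with h0 | h0
    · simp [← h0]
    · rw [show r ψ / q ψ = (q ψ / r ψ)⁻¹ by rw [inv_div], Real.log_inv]; ring
  have hsum : ∑ ψ, q ψ * Real.log (r ψ / q ψ) ≤ 0 := by
    calc ∑ ψ, q ψ * Real.log (r ψ / q ψ) ≤ ∑ ψ, (r ψ - q ψ) := Finset.sum_le_sum key
    _ = 0 := by rw [Finset.sum_sub_distrib, hq1, hr1]; ring
  have hflip : ∑ ψ, q ψ * Real.log (r ψ / q ψ) = -(∑ ψ, q ψ * Real.log (q ψ / r ψ)) := by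
    rw [← Finset.sum_neg_distrib]; exact Finset.sum_congr rfl fun ψ _ => hneg ψ
  constructor
  · linarith [hsum, hflip.symm.le]
  constructor
  · intro hzero
    have hz2 : ∑ ψ, q ψ * Real.log (r ψ / q ψ) = ∑ ψ, (r ψ - q ψ) := by
      rw [hflip, hzero, Finset.sum_sub_distrib, hq1, hr1]; ring
    have heach := (Finset.sum_eq_sum_iff_of_le key).mp hz2
    funext ψ
    have hψ := heach ψ (Finset.mem_univ ψ)
    rcases eq_or_lt_of_le (hq0 ψ) with h0 | h0
    · exfalso; rw [← h0] at hψ; simp at hψ; linarith [hr ψ]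
    · by_contra hne
      have hx : 0 < r ψ / q ψ := div_pos (hr ψ) h0
      have hne1 : r ψ / q ψ ≠ 1 := by
        intro h1; exact hne ((div_eq_one_iff_eq h0.ne').mp h1).symm
      have := Real.log_lt_sub_one_of_pos hx hne1
      have h2 : q ψ * Real.log (r ψ / q ψ) < q ψ * (r ψ / q ψ - 1) :=
        (mul_lt_mul_iff_right₀ h0).mpr this
      have h3 : q ψ * (r ψ / q ψ - 1) = r ψ - q ψ := by field_simp
      linarith
  · intro hqr; subst hqr
    apply Finset.sum_eq_zero
    intro ψ _; simp [div_self (hr ψ).ne']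

/-- **Optimality of Hyper Inference.** Substituting the exact per-class
posterior `π* ψ` into the parsimony objective yields
`ω[π*, Qψ] = ∑ ψ, Qψ ψ * logb 2 (Z ψ / ℓ0) − KL(Qψ‖h)`, which further equals
`logb 2 ((∑ ψ, h ψ * Z ψ)/ℓ0) − KL(Qψ‖h*)` for the hyperposterior `h*`, so
the unique maximizer over `Qψ` is the hyperposterior. -/
theorem optimality_of_hyper_inference
    {Y Θ Ψ : Type*} [Fintype Y] [Fintype Θ] [Fintype Ψ]
    (yObs : Y) (PY : Θ → Y → ℝ)
    (hPYpos : ∀ θ y, 0 < PY θ y) (hPY1 : ∀ θ, ∑ y, PY θ y = 1)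
    (p : Ψ → Θ → ℝ)
    (hppos : ∀ ψ θ, 0 < p ψ θ) (hp1 : ∀ ψ, ∑ θ, p ψ θ = 1)
    (h : Ψ → ℝ) (hhpos : ∀ ψ, 0 < h ψ) (hh1 : ∑ ψ, h ψ = 1)
    (θ0 : Θ) (l0 : ℝ) (hl0 : l0 = PY θ0 yObs)
    (Z : Ψ → ℝ) (hZ : ∀ ψ, Z ψ = ∑ θ, p ψ θ * PY θ yObs)
    (post : Ψ → Θ → ℝ) (hpost : ∀ ψ θ, post ψ θ = p ψ θ * PY θ yObs / Z ψ)
    (hstar : Ψ → ℝ)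
    (hhstar : ∀ ψ, hstar ψ = h ψ * Z ψ / ∑ ψ', h ψ' * Z ψ')
    (Qψ : Ψ → ℝ) (hQψ0 : ∀ ψ, 0 ≤ Qψ ψ) (hQψ1 : ∑ ψ, Qψ ψ = 1) :
    ((∑ ψ, ∑ θ, Qψ ψ * post ψ θ * Real.logb 2 (PY θ yObs / l0))
        - (∑ ψ, Qψ ψ * ∑ θ, post ψ θ * Real.logb 2 (post ψ θ / p ψ θ))
        - (∑ ψ, Qψ ψ * Real.logb 2 (Qψ ψ / h ψ))
      = (∑ ψ, Qψ ψ * Real.logb 2 (Z ψ / l0))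
          - (∑ ψ, Qψ ψ * Real.logb 2 (Qψ ψ / h ψ))) ∧
    ((∑ ψ, Qψ ψ * Real.logb 2 (Z ψ / l0))
        - (∑ ψ, Qψ ψ * Real.logb 2 (Qψ ψ / h ψ))
      = Real.logb 2 ((∑ ψ, h ψ * Z ψ) / l0)
          - ∑ ψ, Qψ ψ * Real.logb 2 (Qψ ψ / hstar ψ)) ∧
    ((∑ ψ, Qψ ψ * Real.logb 2 (Z ψ / l0))
        - (∑ ψ, Qψ ψ * Real.logb 2 (Qψ ψ / h ψ))
      ≤ Real.logb 2 ((∑ ψ, h ψ * Z ψ) / l0)) ∧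
    ((∑ ψ, Qψ ψ * Real.logb 2 (Z ψ / l0))
        - (∑ ψ, Qψ ψ * Real.logb 2 (Qψ ψ / h ψ))
      = Real.logb 2 ((∑ ψ, h ψ * Z ψ) / l0) ↔ Qψ = hstar) := by
  -- basic positivity facts
  have hΨne : (Finset.univ : Finset Ψ).Nonempty := by
    rcases Finset.eq_empty_or_nonempty (Finset.univ : Finset Ψ) with he | hn
    · exfalso; rw [he] at hh1; simp at hh1
    · exact hn
  have hΨne2 := hΨne
  obtain ⟨ψ0, -⟩ := hΨne2
  have hΘne : (Finset.univ : Finset Θ).Nonempty := by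
    rcases Finset.eq_empty_or_nonempty (Finset.univ : Finset Θ) with he | hn
    · exfalso; have := hp1 ψ0; rw [he] at this; simp at this
    · exact hn
  have hl0pos : 0 < l0 := hl0 ▸ hPYpos θ0 yObs
  have hZpos : ∀ ψ, 0 < Z ψ := fun ψ => by
    rw [hZ]
    exact Finset.sum_pos (fun θ _ => mul_pos (hppos ψ θ) (hPYpos θ yObs)) hΘne
  set S : ℝ := ∑ ψ', h ψ' * Z ψ' with hS
  have hSpos : 0 < S :=
    Finset.sum_pos (fun ψ _ => mul_pos (hhpos ψ) (hZpos ψ)) hΨne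
  have hstarpos : ∀ ψ, 0 < hstar ψ := fun ψ => by
    rw [hhstar]; exact div_pos (mul_pos (hhpos ψ) (hZpos ψ)) hSpos
  have hstar1 : ∑ ψ, hstar ψ = 1 := by
    have : ∑ ψ, hstar ψ = (∑ ψ, h ψ * Z ψ) / S := by
      rw [Finset.sum_div]; exact Finset.sum_congr rfl fun ψ _ => hhstar ψ
    rw [this, ← hS, div_self hSpos.ne']
  have hpost1 : ∀ ψ, ∑ θ, post ψ θ = 1 := fun ψ => by
    have : ∑ θ, post ψ θ = (∑ θ, p ψ θ * PY θ yObs) / Z ψ := by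
      rw [Finset.sum_div]; exact Finset.sum_congr rfl fun θ _ => hpost ψ θ
    rw [this, ← hZ, div_self (hZpos ψ).ne']
  have hlog2 : Real.log 2 ≠ 0 := by
    have : (0:ℝ) < Real.log 2 := Real.log_pos (by norm_num)
    exact this.ne'
  -- Part (i)
  have key1 : ∀ ψ, (∑ θ, post ψ θ * Real.logb 2 (PY θ yObs / l0))
      - (∑ θ, post ψ θ * Real.logb 2 (post ψ θ / p ψ θ))
      = Real.logb 2 (Z ψ / l0) := by
    intro ψ
    rw [← Finset.sum_sub_distrib]
    have hterm : ∀ θ ∈ Finset.univ (α := Θ),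
        post ψ θ * Real.logb 2 (PY θ yObs / l0)
          - post ψ θ * Real.logb 2 (post ψ θ / p ψ θ)
        = post ψ θ * Real.logb 2 (Z ψ / l0) := by
      intro θ _
      have hratio : post ψ θ / p ψ θ = PY θ yObs / Z ψ := by
        rw [hpost, div_div, mul_comm (Z ψ) (p ψ θ), mul_div_mul_left _ _ (hppos ψ θ).ne']
      rw [hratio, ← mul_sub]
      congr 1
      rw [Real.logb, Real.logb, Real.logb,
        Real.log_div (hPYpos θ yObs).ne' hl0pos.ne',
        Real.log_div (hPYpos θ yObs).ne' (hZpos ψ).ne',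
        Real.log_div (hZpos ψ).ne' hl0pos.ne']
      ring
    rw [Finset.sum_congr rfl hterm, ← Finset.sum_mul, hpost1 ψ, one_mul]
  have part1 : (∑ ψ, ∑ θ, Qψ ψ * post ψ θ * Real.logb 2 (PY θ yObs / l0))
      - (∑ ψ, Qψ ψ * ∑ θ, post ψ θ * Real.logb 2 (post ψ θ / p ψ θ))
      = ∑ ψ, Qψ ψ * Real.logb 2 (Z ψ / l0) := by
    have e1 : (∑ ψ, ∑ θ, Qψ ψ * post ψ θ * Real.logb 2 (PY θ yObs / l0))
        = ∑ ψ, Qψ ψ * ∑ θ, post ψ θ * Real.logb 2 (PY θ yObs / l0) := by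
      refine Finset.sum_congr rfl fun ψ _ => ?_
      rw [Finset.mul_sum]
      exact Finset.sum_congr rfl fun θ _ => (mul_assoc _ _ _)
    rw [e1, ← Finset.sum_sub_distrib]
    refine Finset.sum_congr rfl fun ψ _ => ?_
    rw [← mul_sub, key1 ψ]
  -- Part (ii): termwise identity
  have key2 : ∀ ψ, Qψ ψ * Real.logb 2 (Z ψ / l0) - Qψ ψ * Real.logb 2 (Qψ ψ / h ψ)
      = Qψ ψ * Real.logb 2 (S / l0) - Qψ ψ * Real.logb 2 (Qψ ψ / hstar ψ) := by
    intro ψ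
    rcases eq_or_lt_of_le (hQψ0 ψ) with h0 | h0
    · simp [← h0]
    · rw [← mul_sub, ← mul_sub]
      congr 1
      have hhs : hstar ψ = h ψ * Z ψ / S := hhstar ψ
      rw [Real.logb, Real.logb, Real.logb, Real.logb,
        Real.log_div (hZpos ψ).ne' hl0pos.ne',
        Real.log_div h0.ne' (hhpos ψ).ne',
        Real.log_div hSpos.ne' hl0pos.ne',
        Real.log_div h0.ne' (hstarpos ψ).ne', hhs,
        Real.log_div (mul_pos (hhpos ψ) (hZpos ψ)).ne' hSpos.ne',
        Real.log_mul (hhpos ψ).ne' (hZpos ψ).ne']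
      ring
  have part2 : (∑ ψ, Qψ ψ * Real.logb 2 (Z ψ / l0))
      - (∑ ψ, Qψ ψ * Real.logb 2 (Qψ ψ / h ψ))
      = Real.logb 2 (S / l0) - ∑ ψ, Qψ ψ * Real.logb 2 (Qψ ψ / hstar ψ) := by
    rw [← Finset.sum_sub_distrib, Finset.sum_congr rfl (fun ψ _ => key2 ψ),
      Finset.sum_sub_distrib, ← Finset.sum_mul, hQψ1, one_mul]
  -- Gibbs for (Qψ, hstar)
  have hgibbs := gibbs_aux Qψ hstar hQψ0 hQψ1 hstarpos hstar1
  have hconv : ∑ ψ, Qψ ψ * Real.logb 2 (Qψ ψ / hstar ψ)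
      = (∑ ψ, Qψ ψ * Real.log (Qψ ψ / hstar ψ)) / Real.log 2 := by
    rw [Finset.sum_div]
    exact Finset.sum_congr rfl fun ψ _ => by rw [Real.logb]; ring
  have hlog2pos : (0:ℝ) < Real.log 2 := Real.log_pos (by norm_num)
  have hKLnn : 0 ≤ ∑ ψ, Qψ ψ * Real.logb 2 (Qψ ψ / hstar ψ) := by
    rw [hconv]; exact div_nonneg hgibbs.1 hlog2pos.le
  have hKLiff : (∑ ψ, Qψ ψ * Real.logb 2 (Qψ ψ / hstar ψ)) = 0 ↔ Qψ = hstar := by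
    rw [hconv, div_eq_zero_iff]
    constructor
    · rintro (h1 | h2)
      · exact hgibbs.2.mp h1
      · exact absurd h2 hlog2
    · intro hq; exact Or.inl (hgibbs.2.mpr hq)
  refine ⟨?_, part2, ?_, ?_⟩
  · rw [part1]
  · rw [part2]; linarith
  · rw [part2]
    constructor
    · intro he; exact hKLiff.mp (by linarith)
    · intro hq; rw [hKLiff.mpr hq] at *; rw [hKLiff.mpr hq]; ring
end

section
/- Let Θ and Ψ be finite types, ℓ : Θ → ℝ strictly positive (the likelihood θ ↦ P(ŷ|θ) of the observed labels), ℓ0 > 0 a baseline, and Pj a strictly positive probability mass function on Θ × Ψ (the joint prior P(θ, ψ)). For a probability mass function Q on Θ × Ψ define the model complexity χ[Q] := KL(Q‖Pj) and the objective ω[Q] := ∑_{(θ,ψ)} Q (θ,ψ) * Real.logb 2 (ℓ θ / ℓ0) − χ[Q]. Let F be any set of probability mass functions on Θ × Ψ and let Q* ∈ F maximize ω over F. Define the optimal predictive likelihood of the observed labels Q*Y := ∑_{(θ,ψ)} Q* (θ,ψ) * ℓ θ. Then every Q ∈ F satisfies χ[Q] − χ[Q*] ≥ ∑_{(θ,ψ)}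 Q (θ,ψ) * Real.logb 2 (ℓ θ / Q*Y): any increase in agreement with the training data over the optimal aggregate predictions can only be achieved by a still greater increase in model complexity. -/
/-- **Quantifying Memorization.** Let `Q*` maximize the parsimony objective
`ω[Q] = ∑ (θ,ψ), Q (θ,ψ) * logb 2 (ℓ θ / ℓ0) − χ[Q]`, with model complexity
`χ[Q] = KL(Q‖Pj)`, over a feasible set `F` of probability mass functions on
`Θ × Ψ`. Then any feasible `Q` satisfies
`χ[Q] − χ[Q*] ≥ ∑ (θ,ψ), Q (θ,ψ) * logb 2 (ℓ θ / Q*Y)`, where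
`Q*Y = ∑ (θ,ψ), Q* (θ,ψ) * ℓ θ` is the optimal predictive likelihood: any
increased agreement with training data costs a still greater increase in
model complexity. -/
theorem quantifying_memorization {Θ Ψ : Type*} [Fintype Θ] [Fintype Ψ]
    (l : Θ → ℝ) (hlpos : ∀ θ, 0 < l θ)
    (l0 : ℝ) (hl0 : 0 < l0)
    (Pj : Θ × Ψ → ℝ) (hPjpos : ∀ x, 0 < Pj x) (hPj1 : ∑ x, Pj x = 1)
    (F : Set (Θ × Ψ → ℝ))
    (hF : ∀ Q ∈ F, (∀ x, 0 ≤ Q x) ∧ ∑ x, Q x = 1)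
    (Qstar : Θ × Ψ → ℝ) (hQstarF : Qstar ∈ F)
    (hmax : ∀ Q ∈ F,
      (∑ x, Q x * Real.logb 2 (l x.1 / l0))
          - (∑ x, Q x * Real.logb 2 (Q x / Pj x))
        ≤ (∑ x, Qstar x * Real.logb 2 (l x.1 / l0))
          - (∑ x, Qstar x * Real.logb 2 (Qstar x / Pj x)))
    (QstarY : ℝ) (hQstarY : QstarY = ∑ x, Qstar x * l x.1) :
    ∀ Q ∈ F,
      (∑ x, Q x * Real.logb 2 (l x.1 / QstarY))
        ≤ (∑ x, Q x * Real.logb 2 (Q x / Pj x))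
          - (∑ x, Qstar x * Real.logb 2 (Qstar x / Pj x)) := by

  intro Q hQ
  obtain ⟨hQ0, hQ1⟩ := hF Q hQ
  obtain ⟨hQs0, hQs1⟩ := hF Qstar hQstarF
  have hne : (Finset.univ : Finset (Θ × Ψ)).Nonempty := by
    by_contra h
    rw [Finset.not_nonempty_iff_eq_empty] at h
    rw [h, Finset.sum_empty] at hQ1
    norm_num at hQ1
  have hY : 0 < QstarY := by
    rw [hQstarY]
    obtain ⟨i, hi⟩ : ∃ i, 0 < Qstar i := by
      by_contra h
      push_neg at h
      have : ∑ x, Qstar x ≤ 0 := Finset.sum_nonpos fun i _ => h i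
      linarith [hQs1]
    exact Finset.sum_pos' (fun j _ => mul_nonneg (hQs0 j) (hlpos j.1).le)
      ⟨i, Finset.mem_univ i, mul_pos hi (hlpos i.1)⟩
  have jensen : ∑ x, Qstar x * Real.log (l x.1) ≤ Real.log QstarY := by
    have h := ConcaveOn.le_map_sum (StrictConcaveOn.concaveOn strictConcaveOn_log_Ioi)
      (t := Finset.univ) (w := Qstar) (p := fun x : Θ × Ψ => l x.1)
      (fun i _ => hQs0 i) hQs1 (fun i _ => hlpos i.1)
    simpa [smul_eq_mul, hQstarY] using h
  have hlog2 : (0:ℝ) < Real.log 2 := Real.log_pos (by norm_num)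
  have jensenb : ∑ x, Qstar x * Real.logb 2 (l x.1) ≤ Real.logb 2 QstarY := by
    have h1 : ∑ x, Qstar x * Real.logb 2 (l x.1)
        = (∑ x, Qstar x * Real.log (l x.1)) / Real.log 2 := by
      rw [Finset.sum_div]
      exact Finset.sum_congr rfl fun x _ => by rw [Real.logb]; ring
    rw [h1, Real.logb]
    exact div_le_div_of_nonneg_right jensen hlog2.le
  have key := hmax Q hQ
  have expand : ∀ (R : Θ × Ψ → ℝ) (c : ℝ), 0 < c → (∑ x, R x = 1) →
      ∑ x, R x * Real.logb 2 (l x.1 / c)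
        = (∑ x, R x * Real.logb 2 (l x.1)) - Real.logb 2 c := by
    intro R c hc hR
    have : ∀ x : Θ × Ψ, R x * Real.logb 2 (l x.1 / c)
        = R x * Real.logb 2 (l x.1) - R x * Real.logb 2 c := by
      intro x
      rw [Real.logb_div (hlpos x.1).ne' hc.ne']
      ring
    rw [Finset.sum_congr rfl fun x _ => this x, Finset.sum_sub_distrib,
      ← Finset.sum_mul, hR, one_mul]
  rw [expand Q QstarY hY hQ1]
  rw [expand Q l0 hl0 hQ1, expand Qstar l0 hl0 hQs1] at key
  linarith
end

section
/- Let Z be a finite type, let R and Q1 be probability mass functions on Z with Q1 strictly positive and R ≠ Q1, let Q0 be a strictly positive probability mass function on Z, and let η : Z → ℝ satisfy: ∑_z η z = 0 (normalization is preserved), η z * (R z − Q1 z) ≥ 0 for all z (the perturbation drives belief toward R), and η z * (R z − Q1 z) > 0 for some z. Then: (i) the function ε ↦ ∑_z R z * Real.logb 2 ((Q1 z + ε * η z) / Q0 z) has derivative at ε = 0 equal to (1 / Real.log 2) * ∑_z R z * η z / Q1 z; and (ii) this derivative is strictly positive. -/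
/-- **Proper perturbation response.** If a normalization-preserving
perturbation `η` drives belief `Q1` toward the view `R` (with `R ≠ Q1`), then
the information `ε ↦ I(R; Q1 + ε η, Q0)` has derivative
`(1 / log 2) * ∑ z, R z * η z / Q1 z` at `ε = 0`, and this derivative is
strictly positive. -/
theorem proper_perturbation_response {Z : Type*} [Fintype Z]
    (R Q1 Q0 : Z → ℝ)
    (hR0 : ∀ z, 0 ≤ R z) (hR1 : ∑ z, R z = 1)
    (hQ1pos : ∀ z, 0 < Q1 z) (hQ11 : ∑ z, Q1 z = 1)
    (hQ0pos : ∀ z, 0 < Q0 z) (hQ01 : ∑ z, Q0 z = 1)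
    (hne : R ≠ Q1)
    (η : Z → ℝ) (hη0 : ∑ z, η z = 0)
    (htoward : ∀ z, 0 ≤ η z * (R z - Q1 z))
    (hstrict : ∃ z, 0 < η z * (R z - Q1 z)) :
    HasDerivAt (fun ε : ℝ => ∑ z, R z * Real.logb 2 ((Q1 z + ε * η z) / Q0 z))
        ((1 / Real.log 2) * ∑ z, R z * η z / Q1 z) 0 ∧
    0 < (1 / Real.log 2) * ∑ z, R z * η z / Q1 z := by
  have hlog2 : (0:ℝ) < Real.log 2 := Real.log_pos (by norm_num)
  constructor
  · have h : ∀ z ∈ Finset.univ, HasDerivAt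
        (fun ε : ℝ => R z * Real.logb 2 ((Q1 z + ε * η z) / Q0 z))
        (R z * η z / Q1 z / Real.log 2) 0 := by
      intro z _
      have hg : HasDerivAt (fun ε : ℝ => (Q1 z + ε * η z) / Q0 z) (η z / Q0 z) 0 := by
        have : HasDerivAt (fun ε : ℝ => Q1 z + ε * η z) (η z) 0 := by
          simpa using ((hasDerivAt_id (0:ℝ)).mul_const (η z)).const_add (Q1 z)
        exact this.div_const _
      have hval : (Q1 z + (0:ℝ) * η z) / Q0 z = Q1 z / Q0 z := by ring
      have hpos : (0:ℝ) < (Q1 z + (0:ℝ) * η z) / Q0 z := by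
        rw [hval]; exact div_pos (hQ1pos z) (hQ0pos z)
      have hlog := (Real.hasDerivAt_log hpos.ne').comp 0 hg
      simp only [Real.logb]
      have := (hlog.div_const (Real.log 2)).const_mul (R z)
      refine this.congr_deriv ?_
      simp only [Function.comp, hval]
      have h0 := (hQ0pos z).ne'
      have h1 := (hQ1pos z).ne'
      field_simp
    have := HasDerivAt.fun_sum h
    refine this.congr_deriv ?_
    rw [Finset.mul_sum]
    refine Finset.sum_congr rfl fun z _ => ?_
    field_simp
  · have key : ∑ z, R z * η z / Q1 z = ∑ z, η z * (R z - Q1 z) / Q1 z := by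
      rw [← sub_eq_zero, ← Finset.sum_sub_distrib, ← hη0]
      refine Finset.sum_congr rfl fun z _ => ?_
      have := (hQ1pos z).ne'
      field_simp
      ring
    rw [key]
    refine mul_pos (by positivity) ?_
    obtain ⟨z₀, hz₀⟩ := hstrict
    refine Finset.sum_pos' (fun z _ => div_nonneg (htoward z) (hQ1pos z).le) ⟨z₀, Finset.mem_univ _, div_pos hz₀ (hQ1pos z₀)⟩
end
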